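/- Let a and b be integers with 0 < a < b such that a does not divide b, and let [a₀, a₁, …, aₙ] be the continued fraction expansion of b/a. Then the Sprague–Grundy value of the M-Euclid position {a,b} is 𝒢_M(a,b) = ⌊b/a⌋ if 𝓙(a,b) is even, and 𝒢_M(a,b) = ⌊b/a⌋ − 1 if 𝓙(a,b) is odd. -/
import Mathlib


/-- The minimum excludant of a set of natural numbers: the least nonnegative
integer not belonging to the set. -/
noncomputable def mex (S : Set ℕ) : ℕ := sInf {n : ℕ | n ∉ S}

/-- `cf a b` is the continued fraction expansion `[a₀, a₁, …, aₙ]` of `b / a`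
(for `0 < a`), computed by the Euclidean algorithm; the convention `aₙ > 1`
whenever `n > 0` holds automatically. -/
def cf (a b : ℕ) : List ℕ :=
  if h : a = 0 then [] else (b / a) :: cf (b % a) a
termination_by a
decreasing_by exact Nat.mod_lt _ (Nat.pos_of_ne_zero h)

/-- `𝓙(a,b)`: the largest nonnegative integer `j < n` such that
`a₀ = a₁ = ⋯ = a_{j−1} ≤ a_j` in the continued fraction `[a₀, …, aₙ]` of `b / a`
(for `j = 0` the condition is vacuous). -/
def Jfun (a b : ℕ) : ℕ :=
  Nat.findGreatest
    (fun j => j + 1 < (cf a b).length ∧ (∀ i < j, (cf a b).getD i 0 = (cf a b).getD 0 0) ∧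
      (cf a b).getD 0 0 ≤ (cf a b).getD j 0)
    ((cf a b).length - 2)

/-- Moves in M-Euclid.  Positions are unordered pairs of positive integers,
represented as sorted pairs; positions in which one entry is a positive integer
multiple of the other (in particular pairs with equal entries) are terminal;
from a nonterminal `{a, b}` with `a < b` one may move to `{a, b − k·a}` for any
positive integer `k` with `b − k·a ≥ 1`. -/
def meuclidMove (p q : ℕ × ℕ) : Prop :=
  0 < p.1 ∧ p.1 < p.2 ∧ ¬ p.1 ∣ p.2 ∧
    ∃ k : ℕ, 0 < k ∧ k * p.1 < p.2 ∧
      q = (min p.1 (p.2 - k * p.1), max p.1 (p.2 - k * p.1))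

/-- The Sprague–Grundy function of M-Euclid:
`𝒢_M(p) = mex { 𝒢_M(q) : q an option of p }`. -/
noncomputable def meuclidGrundy (p : ℕ × ℕ) : ℕ :=
  mex {g : ℕ | ∃ q : ℕ × ℕ, ∃ _ : meuclidMove p q, meuclidGrundy q = g}
termination_by p.1 + p.2
decreasing_by
  rename_i hq
  obtain ⟨h1, h2, hnd, k, hk, hle, rfl⟩ := hq
  have : p.1 ≤ k * p.1 := Nat.le_mul_of_pos_left p.1 hk
  simp only [Nat.min_def, Nat.max_def]
  split <;> omega

lemma mex_eq_of (S : Set ℕ) (n : ℕ) (h1 : n ∉ S) (h2 : ∀ m < n, m ∈ S) : mex S = n := by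
  unfold mex
  refine le_antisymm (Nat.sInf_le h1) (le_csInf ⟨n, h1⟩ ?_)
  intro m hm
  by_contra h
  push_neg at h
  exact hm (h2 m h)

lemma grundy_unfold (p : ℕ × ℕ) :
    meuclidGrundy p = mex {g : ℕ | ∃ q : ℕ × ℕ, ∃ _ : meuclidMove p q, meuclidGrundy q = g} := by
  rw [meuclidGrundy]

lemma grundy_terminal (r a : ℕ) (h : r ∣ a) : meuclidGrundy (r, a) = 0 := by
  rw [grundy_unfold]
  apply mex_eq_of
  · rintro ⟨p, hm, -⟩
    exact hm.2.2.1 h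
  · intro m hm; omega

lemma cf_cons (a b : ℕ) (ha : a ≠ 0) : cf a b = (b / a) :: cf (b % a) a := by
  rw [cf, dif_neg ha]

lemma cf_zero (b : ℕ) : cf 0 b = [] := by rw [cf]; simp

lemma moves_iff (a r q : ℕ) (hr : 0 < r) (hra : r < a) (hq : 0 < q) (p : ℕ × ℕ) :
    meuclidMove (a, q * a + r) p ↔
      (∃ j, 0 < j ∧ j < q ∧ p = (a, j * a + r)) ∨ p = (r, a) := by
  constructor
  · rintro ⟨-, -, -, k, hk, hlt, rfl⟩
    simp only at hlt ⊢
    have hkq : k ≤ q := by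
      by_contra h
      push_neg at h
      have : (q + 1) * a ≤ k * a := Nat.mul_le_mul_right a h
      have : q * a + a ≤ k * a := by nlinarith
      omega
    rcases eq_or_lt_of_le hkq with rfl | hkq'
    · right
      have h1 : k * a + r - k * a = r := by omega
      rw [h1, min_eq_right hra.le, max_eq_left hra.le]
    · left
      refine ⟨q - k, by omega, by omega, ?_⟩
      have h1 : q * a + r - k * a = (q - k) * a + r := by
        rw [Nat.sub_mul]
        have : k * a ≤ q * a := Nat.mul_le_mul_right a hkq
        omega
      have h2 : a ≤ (q - k) * a := Nat.le_mul_of_pos_left a (by omega)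
      rw [h1, min_eq_left (by omega), max_eq_right (by omega)]
  · have hand : ¬ a ∣ q * a + r := by
      intro h
      have : a ∣ r := (Nat.dvd_add_right (Dvd.intro_left q rfl)).mp h
      exact absurd (Nat.le_of_dvd hr this) (by omega)
    have hapos : 0 < a := by omega
    have haq : a ≤ q * a := Nat.le_mul_of_pos_left a hq
    rintro (⟨j, hj0, hjq, rfl⟩ | rfl)
    · refine ⟨hapos, by omega, hand, q - j, by omega, ?_, ?_⟩
      · simp only
        have : (q - j) * a ≤ q * a := Nat.mul_le_mul_right a (by omega)
        calc (q - j) * a ≤ q * a := this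
          _ < q * a + r := by omega
      · simp only
        have h1 : q * a + r - (q - j) * a = j * a + r := by
          rw [Nat.sub_mul]
          have h2 : j * a ≤ q * a := Nat.mul_le_mul_right a hjq.le
          omega
        have h2 : a ≤ j * a := Nat.le_mul_of_pos_left a hj0
        rw [h1, min_eq_left (by omega), max_eq_right (by omega)]
    · refine ⟨hapos, by omega, hand, q, hq, by simp only; omega, ?_⟩
      simp only
      have h1 : q * a + r - q * a = r := by omega
      rw [h1, min_eq_right hra.le, max_eq_left hra.le]

lemma grundy_formula (a r : ℕ) (hr : 0 < r) (hra : r < a) :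
    ∀ q, 0 < q →
      meuclidGrundy (a, q * a + r) = if q ≤ meuclidGrundy (r, a) then q - 1 else q := by
  intro q
  induction q using Nat.strong_induction_on with
  | _ q IH =>
    intro hq
    set g := meuclidGrundy (r, a) with hg
    rw [grundy_unfold]
    have hmem : ∀ v : ℕ,
        (v ∈ {g : ℕ | ∃ p : ℕ × ℕ, ∃ _ : meuclidMove (a, q * a + r) p, meuclidGrundy p = g}) ↔
        ((∃ j, 0 < j ∧ j < q ∧ v = if j ≤ g then j - 1 else j) ∨ v = g) := by
      intro v
      constructor
      · rintro ⟨p, hm, rfl⟩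
        rcases (moves_iff a r q hr hra hq p).mp hm with ⟨j, hj0, hjq, rfl⟩ | rfl
        · exact Or.inl ⟨j, hj0, hjq, IH j hjq hj0⟩
        · exact Or.inr rfl
      · rintro (⟨j, hj0, hjq, rfl⟩ | rfl)
        · exact ⟨(a, j * a + r), (moves_iff a r q hr hra hq _).mpr (Or.inl ⟨j, hj0, hjq, rfl⟩),
            IH j hjq hj0⟩
        · exact ⟨(r, a), (moves_iff a r q hr hra hq _).mpr (Or.inr rfl), rfl⟩
    by_cases hcase : q ≤ g
    · rw [if_pos hcase]
      apply mex_eq_of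
      · rw [hmem]
        rintro (⟨j, hj0, hjq, hv⟩ | hv)
        · split_ifs at hv <;> omega
        · omega
      · intro m hm
        rw [hmem]
        exact Or.inl ⟨m + 1, by omega, by omega, by rw [if_pos (by omega)]; omega⟩
    · rw [if_neg hcase]
      apply mex_eq_of
      · rw [hmem]
        rintro (⟨j, hj0, hjq, hv⟩ | hv)
        · split_ifs at hv <;> omega
        · omega
      · intro m hm
        rw [hmem]
        rcases lt_trichotomy m g with h | rfl | h
        · exact Or.inl ⟨m + 1, by omega, by omega, by rw [if_pos (by omega)]; omega⟩
        · exact Or.inr rfl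
        · exact Or.inl ⟨m, by omega, by omega, by rw [if_neg (by omega)]⟩

def JfunL (l : List ℕ) : ℕ :=
  Nat.findGreatest
    (fun j => j + 1 < l.length ∧ (∀ i < j, l.getD i 0 = l.getD 0 0) ∧
      l.getD 0 0 ≤ l.getD j 0)
    (l.length - 2)

lemma Jfun_eq_JfunL (a b : ℕ) : Jfun a b = JfunL (cf a b) := rfl

lemma JL_gt (q a₁ : ℕ) (t : List ℕ) (h : a₁ < q) : JfunL (q :: a₁ :: t) = 0 := by
  rw [JfunL, Nat.findGreatest_eq_zero_iff]
  rintro m hm - ⟨-, hall, hle⟩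
  rcases Nat.eq_or_lt_of_le hm with rfl | hm2
  · simp [List.getD_cons_zero, List.getD_cons_succ] at hle
    omega
  · have := hall 1 (by omega)
    simp [List.getD_cons_zero, List.getD_cons_succ] at this
    omega

lemma JL_lt (q a₁ : ℕ) (t : List ℕ) (ht : t ≠ []) (h : q < a₁) : JfunL (q :: a₁ :: t) = 1 := by
  have htl : 1 ≤ t.length := List.length_pos_iff.mpr ht
  rw [JfunL, Nat.findGreatest_eq_iff]
  refine ⟨by simp; omega, fun _ => ⟨by simp; omega, ?_, ?_⟩, ?_⟩
  · intro i hi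
    interval_cases i
    rfl
  · simp [List.getD_cons_zero, List.getD_cons_succ]; omega
  · rintro m hm - ⟨-, hall, -⟩
    have := hall 1 (by omega)
    simp [List.getD_cons_zero, List.getD_cons_succ] at this
    omega

lemma JL_eq (q : ℕ) (t : List ℕ) (ht : t ≠ []) : JfunL (q :: q :: t) = JfunL (q :: t) + 1 := by
  have htl : 1 ≤ t.length := List.length_pos_iff.mpr ht
  unfold JfunL
  set L : List ℕ := q :: t with hL
  set P' : ℕ → Prop := fun j => j + 1 < L.length ∧ (∀ i < j, L.getD i 0 = L.getD 0 0) ∧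
      L.getD 0 0 ≤ L.getD j 0 with hP'
  set P : ℕ → Prop := fun j => j + 1 < (q :: L).length ∧
      (∀ i < j, (q :: L).getD i 0 = (q :: L).getD 0 0) ∧
      (q :: L).getD 0 0 ≤ (q :: L).getD j 0 with hP
  have hLlen : L.length = t.length + 1 := by rw [hL]; rfl
  have hL0 : L[0]?.getD 0 = q := by rw [hL]; simp
  have hL0' : L.getD 0 0 = q := by rw [hL]; simp
  have hiff : ∀ j, P (j + 1) ↔ P' j := by
    intro j
    rw [hP, hP']
    constructor
    · rintro ⟨h1, h2, h3⟩
      refine ⟨by simpa using h1, fun i hi => ?_, by simpa [hL0, hL0'] using h3⟩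
      have := h2 (i + 1) (by omega)
      simpa [hL0, hL0'] using this
    · rintro ⟨h1, h2, h3⟩
      refine ⟨by simpa using h1, fun i hi => ?_, by simpa [hL0, hL0'] using h3⟩
      match i with
      | 0 => rfl
      | i + 1 =>
        have := h2 i (by omega)
        simpa [hL0, hL0'] using this
  set J' : ℕ := Nat.findGreatest P' (L.length - 2) with hJ'
  have hJ'le : J' ≤ L.length - 2 := Nat.findGreatest_le _
  have hP'0 : P' 0 := ⟨by omega, by omega, le_refl _⟩
  have hP'J : P' J' := Nat.findGreatest_spec (m := 0) (Nat.zero_le _) hP'0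
  rw [Nat.findGreatest_eq_iff]
  refine ⟨by simp only [List.length_cons]; omega, fun _ => (hiff _).mpr hP'J, ?_⟩
  rintro m hm hmle hPm
  match m, hm with
  | j + 1, hm =>
    have hjle : j ≤ L.length - 2 := by
      simp only [List.length_cons] at hmle
      omega
    exact Nat.findGreatest_is_greatest (by omega) hjle ((hiff j).mp hPm)

lemma JL_len2 (x y : ℕ) : JfunL [x, y] = 0 := by
  unfold JfunL
  simp


/-- **Theorem 2 of the paper.**  For `0 < a < b` with `a ∤ b`, the
Sprague–Grundy value of the M-Euclid position `{a, b}` is `⌊b/a⌋` if `𝓙(a,b)`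
is even and `⌊b/a⌋ − 1` if `𝓙(a,b)` is odd. -/
theorem meuclidGrundy_eq (a b : ℕ) (ha : 0 < a) (hab : a < b) (hnd : ¬ a ∣ b) :
    meuclidGrundy (a, b) = if Even (Jfun a b) then b / a else b / a - 1 := by
  induction b using Nat.strong_induction_on generalizing a with
  | _ b IH =>
    set r := b % a with hr
    set q := b / a with hq
    have hr0 : 0 < r := by
      rcases Nat.eq_zero_or_pos r with h | h
      · exact absurd (Nat.dvd_of_mod_eq_zero h) hnd
      · exact h
    have hrb : r < a := Nat.mod_lt b ha
    have hq0 : 0 < q := Nat.div_pos hab.le ha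
    have hb : b = q * a + r := by rw [hq, hr, mul_comm]; exact (Nat.div_add_mod b a).symm
    have hgf := grundy_formula a r hr0 hrb q hq0
    rw [show ((a, b) : ℕ × ℕ) = (a, q * a + r) from by rw [← hb]]
    rw [hgf]
    have hcfb : cf a b = q :: cf r a := cf_cons a b ha.ne'
    by_cases hdvd : r ∣ a
    · have hg0 : meuclidGrundy (r, a) = 0 := grundy_terminal r a hdvd
      have har0 : a % r = 0 := by obtain ⟨c, hc⟩ := hdvd; simp [hc, Nat.mul_mod_right]
      have hcf2 : cf a b = [q, a / r] := by
        rw [hcfb, cf_cons r a hr0.ne', har0, cf_zero]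
      have hJ : Jfun a b = 0 := by rw [Jfun_eq_JfunL, hcf2]; exact JL_len2 _ _
      rw [hg0, hJ]
      rw [if_neg (by omega), if_pos Even.zero]
    · have ha_r : a % r ≠ 0 := fun h => hdvd (Nat.dvd_of_mod_eq_zero h)
      have hcfr : cf r a = (a / r) :: cf (a % r) r := cf_cons r a hr0.ne'
      have hne : cf (a % r) r ≠ [] := by rw [cf_cons _ _ ha_r]; simp
      have hIH := IH a hab r hr0 hrb hdvd
      set a₁ := a / r with ha₁
      have ha₁0 : 0 < a₁ := Nat.div_pos hrb.le hr0
      rcases lt_trichotomy q a₁ with hlt | heq | hgt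
      · have hJ : Jfun a b = 1 := by
          rw [Jfun_eq_JfunL, hcfb, hcfr]; exact JL_lt q a₁ _ hne hlt
        rw [hIH, hJ, if_neg Nat.not_even_one]
        split_ifs <;> omega
      · have hcfr' : cf r a = q :: cf (a % r) r := by rw [hcfr, ← heq]
        have hJ : Jfun a b = Jfun r a + 1 := by
          rw [Jfun_eq_JfunL, Jfun_eq_JfunL, hcfb, hcfr', JL_eq q _ hne]
        rw [hIH, hJ]
        rcases Nat.even_or_odd (Jfun r a) with he | ho
        · have hne1 : ¬ Even (Jfun r a + 1) := by simp [Nat.even_add_one, he]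
          rw [if_pos he, if_neg hne1, if_pos (le_of_eq heq)]
        · have he' : ¬ Even (Jfun r a) := Nat.not_even_iff_odd.mpr ho
          have he1 : Even (Jfun r a + 1) := Nat.even_add_one.mpr he'
          rw [if_neg he', if_pos he1, if_neg (by omega)]
      · have hJ : Jfun a b = 0 := by
          rw [Jfun_eq_JfunL, hcfb, hcfr]; exact JL_gt q a₁ _ hgt
        rw [hIH, hJ, if_pos Even.zero]
        split_ifs <;> omega
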